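/- Assume (H1), and let u, v : ℝ → ℝ be differentiable functions with u(φ) > 0, v(φ) > 0 and (u(φ), v(φ), φ) satisfying the system (AE) for every φ ∈ ℝ. Then for every φ the quantity D(φ) := g₁₂·g₂₁ − (d₁/u(φ) + g₁₁)·(d₂/v(φ) + g₂₂) is strictly negative, and the derivatives satisfy u'(φ) = −(g₁₂·θ₂ − θ₁·(d₂/v(φ) + g₂₂))/D(φ) and v'(φ) = −(g₂₁·θ₁ − θ₂·(d₁/u(φ) + g₁₁))/D(φ); consequently u'(φ) < 0 and v'(φ) > 0 for all φ ∈ ℝ. (Proposition 2.5(ii): derivative formulas and strict monotonicity of the solution branch.) -/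
import Mathlib


/-- Proposition 2.5(ii): derivative formulas and strict monotonicity of the
solution branch `(u(φ), v(φ))` of (AE) under (H1). -/
theorem stmt_5 (d₁ d₂ θ₁ θ₂ g₁₁ g₁₂ g₂₁ g₂₂ c₁ c₂ : ℝ)
    (hd₁ : 0 < d₁) (hd₂ : 0 < d₂) (hθ₁ : 0 < θ₁) (hθ₂ : θ₂ < 0)
    (hg₁₁ : 0 < g₁₁) (hg₁₂ : 0 < g₁₂) (hg₂₁ : 0 < g₂₁) (hg₂₂ : 0 < g₂₂)
    (hH1 : 0 ≤ g₁₁ * g₂₂ - g₁₂ * g₂₁)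
    (u v : ℝ → ℝ) (hu : Differentiable ℝ u) (hv : Differentiable ℝ v)
    (hupos : ∀ φ : ℝ, 0 < u φ) (hvpos : ∀ φ : ℝ, 0 < v φ)
    (hAE1 : ∀ φ : ℝ, d₁ * Real.log (u φ) + θ₁ * φ + g₁₁ * u φ + g₁₂ * v φ = c₁)
    (hAE2 : ∀ φ : ℝ, d₂ * Real.log (v φ) + θ₂ * φ + g₂₁ * u φ + g₂₂ * v φ = c₂) :
    ∀ φ : ℝ,
      g₁₂ * g₂₁ - (d₁ / u φ + g₁₁) * (d₂ / v φ + g₂₂) < 0 ∧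
      deriv u φ = -((g₁₂ * θ₂ - θ₁ * (d₂ / v φ + g₂₂)) /
        (g₁₂ * g₂₁ - (d₁ / u φ + g₁₁) * (d₂ / v φ + g₂₂))) ∧
      deriv v φ = -((g₂₁ * θ₁ - θ₂ * (d₁ / u φ + g₁₁)) /
        (g₁₂ * g₂₁ - (d₁ / u φ + g₁₁) * (d₂ / v φ + g₂₂))) ∧
      deriv u φ < 0 ∧ 0 < deriv v φ := by
  intro φ
  have hun : u φ ≠ 0 := (hupos φ).ne'
  have hvn : v φ ≠ 0 := (hvpos φ).ne'
  set u' := deriv u φ with hu'def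
  set v' := deriv v φ with hv'def
  have hdu : HasDerivAt u u' φ := (hu φ).hasDerivAt
  have hdv : HasDerivAt v v' φ := (hv φ).hasDerivAt
  -- derivative of first AE equation
  have h1 : HasDerivAt (fun x => d₁ * Real.log (u x) + θ₁ * x + g₁₁ * u x + g₁₂ * v x)
      (d₁ * (u' / u φ) + θ₁ * 1 + g₁₁ * u' + g₁₂ * v') φ := by
    exact ((((hdu.log hun).const_mul d₁).add ((hasDerivAt_id φ).const_mul θ₁)).add
      (hdu.const_mul g₁₁)).add (hdv.const_mul g₁₂)
  have h2 : HasDerivAt (fun x => d₂ * Real.log (v x) + θ₂ * x + g₂₁ * u x + g₂₂ * v x)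
      (d₂ * (v' / v φ) + θ₂ * 1 + g₂₁ * u' + g₂₂ * v') φ := by
    exact ((((hdv.log hvn).const_mul d₂).add ((hasDerivAt_id φ).const_mul θ₂)).add
      (hdu.const_mul g₂₁)).add (hdv.const_mul g₂₂)
  have hc1 : (fun x => d₁ * Real.log (u x) + θ₁ * x + g₁₁ * u x + g₁₂ * v x) = fun _ => c₁ :=
    funext hAE1
  have hc2 : (fun x => d₂ * Real.log (v x) + θ₂ * x + g₂₁ * u x + g₂₂ * v x) = fun _ => c₂ :=
    funext hAE2
  have e1 : d₁ * (u' / u φ) + θ₁ * 1 + g₁₁ * u' + g₁₂ * v' = 0 := by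
    have := h1
    rw [hc1] at this
    exact this.unique (hasDerivAt_const φ c₁)
  have e2 : d₂ * (v' / v φ) + θ₂ * 1 + g₂₁ * u' + g₂₂ * v' = 0 := by
    have := h2
    rw [hc2] at this
    exact this.unique (hasDerivAt_const φ c₂)
  set a := d₁ / u φ + g₁₁ with ha
  set b := d₂ / v φ + g₂₂ with hb
  have hA : g₁₁ < a := by
    have : 0 < d₁ / u φ := div_pos hd₁ (hupos φ)
    rw [ha]; linarith
  have hB : g₂₂ < b := by
    have : 0 < d₂ / v φ := div_pos hd₂ (hvpos φ)
    rw [hb]; linarith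
  have hD : g₁₂ * g₂₁ - a * b < 0 := by nlinarith
  have hDne : g₁₂ * g₂₁ - a * b ≠ 0 := ne_of_lt hD
  -- rewrite equations in terms of a, b
  have E1 : a * u' + g₁₂ * v' = -θ₁ := by
    have h : d₁ * (u' / u φ) = (d₁ / u φ) * u' := by ring
    rw [ha]; linear_combination e1 - h
  have E2 : g₂₁ * u' + b * v' = -θ₂ := by
    have h : d₂ * (v' / v φ) = (d₂ / v φ) * v' := by ring
    rw [hb]; linear_combination e2 - h
  have hu'eq : u' = -((g₁₂ * θ₂ - θ₁ * b) / (g₁₂ * g₂₁ - a * b)) := by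
    rw [← neg_div, eq_comm, div_eq_iff hDne]
    linear_combination -g₁₂ * E2 + b * E1
  have hv'eq : v' = -((g₂₁ * θ₁ - θ₂ * a) / (g₁₂ * g₂₁ - a * b)) := by
    rw [← neg_div, eq_comm, div_eq_iff hDne]
    linear_combination -g₂₁ * E1 + a * E2
  have hN1 : g₁₂ * θ₂ - θ₁ * b < 0 := by nlinarith
  have hN2 : 0 < g₂₁ * θ₁ - θ₂ * a := by nlinarith
  refine ⟨hD, hu'eq, hv'eq, ?_, ?_⟩
  · rw [hu'eq]
    have := div_pos_of_neg_of_neg hN1 hD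
    linarith
  · rw [hv'eq]
    have := div_neg_of_pos_of_neg hN2 hD
    linarith
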